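/- Let f : ℝ^s × ℝ^t → ℝ be pseudo-Lipschitz of order k, i.e., there is L > 0 with |f(u) − f(v)| ≤ L(1 + ‖u‖^(k−1) + ‖v‖^(k−1))‖u − v‖ for all u, v. Let X be a random variable in ℝ^s with E[‖X‖^(k−1)] < ∞. Then the marginalized function g(y) = E[f(X, y)] is pseudo-Lipschitz of order k on ℝ^t. -/

import Mathlib

open MeasureTheory

private lemma two_pow_split (n : ℕ) (a b : ℝ) (ha : 0 ≤ a) (hb : 0 ≤ b) :
    (a + b) ^ n ≤ 2 ^ n * (a ^ n + b ^ n) := by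
  calc (a + b) ^ n ≤ (2 * max a b) ^ n := by
        apply pow_le_pow_left₀ (by positivity)
        rcases le_total a b with h | h
        · simp [max_eq_right h]; linarith
        · simp [max_eq_left h]; linarith
    _ = 2 ^ n * (max a b) ^ n := mul_pow 2 _ n
    _ ≤ 2 ^ n * (a ^ n + b ^ n) := by
        apply mul_le_mul_of_nonneg_left _ (by positivity)
        rcases le_total a b with h | h
        · simp [max_eq_right h]; nlinarith [pow_le_pow_left₀ ha h n, pow_nonneg ha n]
        · simp [max_eq_left h]; nlinarith [pow_le_pow_left₀ hb h n, pow_nonneg hb n]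

/-- If `f : ℝ^s × ℝ^t → ℝ` is pseudo-Lipschitz of order `k` (with the Euclidean norm on the
product) and `X` is a random vector in `ℝ^s` with `E[‖X‖^(k−1)] < ∞`, then the marginalized
function `g(y) = E[f(X, y)]` is pseudo-Lipschitz of order `k` on `ℝ^t`. -/
theorem marginal_pseudoLipschitz {s t : ℕ} {Ω : Type*} [MeasurableSpace Ω]
    (μ : Measure Ω) [IsProbabilityMeasure μ] (k : ℕ)
    (f : WithLp 2 (EuclideanSpace ℝ (Fin s) × EuclideanSpace ℝ (Fin t)) → ℝ)
    (L : ℝ) (hL : 0 < L)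
    (hf : ∀ u v : WithLp 2 (EuclideanSpace ℝ (Fin s) × EuclideanSpace ℝ (Fin t)),
      |f u - f v| ≤ L * (1 + ‖u‖ ^ (k - 1) + ‖v‖ ^ (k - 1)) * ‖u - v‖)
    (X : Ω → EuclideanSpace ℝ (Fin s)) (hX : Measurable X)
    (hmom : Integrable (fun ω => ‖X ω‖ ^ (k - 1)) μ) :
    ∃ L' > 0, ∀ y y' : EuclideanSpace ℝ (Fin t),
      |(∫ ω, f ((WithLp.equiv 2
            (EuclideanSpace ℝ (Fin s) × EuclideanSpace ℝ (Fin t))).symm (X ω, y)) ∂μ) -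
        (∫ ω, f ((WithLp.equiv 2
            (EuclideanSpace ℝ (Fin s) × EuclideanSpace ℝ (Fin t))).symm (X ω, y')) ∂μ)| ≤
        L' * (1 + ‖y‖ ^ (k - 1) + ‖y'‖ ^ (k - 1)) * ‖y - y'‖ := by
  set n := k - 1 with hn
  set C := ∫ ω, ‖X ω‖ ^ n ∂μ with hC
  have hC0 : 0 ≤ C := integral_nonneg fun ω => by positivity
  have h2n : (1:ℝ) ≤ 2 ^ n := one_le_pow₀ one_le_two
  -- continuity of f
  have hcont : Continuous f := by
    rw [continuous_iff_continuousAt]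
    intro u
    have hc1 : Continuous fun v : WithLp 2 (EuclideanSpace ℝ (Fin s) ×
        EuclideanSpace ℝ (Fin t)) => L * (1 + ‖v‖ ^ n + ‖u‖ ^ n) * ‖v - u‖ := by fun_prop
    have h1 := hc1.tendsto u
    rw [sub_self, norm_zero, mul_zero] at h1
    have h2 : Filter.Tendsto (fun v => |f v - f u|) (nhds u) (nhds 0) :=
      squeeze_zero (fun v => abs_nonneg _) (fun v => hf v u) h1
    rw [Metric.continuousAt_iff']
    intro ε hε
    filter_upwards [h2.eventually (eventually_lt_nhds hε)] with v hv
    simpa [Real.dist_eq] using hv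
  -- norm bound for the pair
  have hpair : ∀ (x : EuclideanSpace ℝ (Fin s)) (y : EuclideanSpace ℝ (Fin t)),
      ‖(WithLp.equiv 2 (EuclideanSpace ℝ (Fin s) × EuclideanSpace ℝ (Fin t))).symm (x, y)‖
        ≤ ‖x‖ + ‖y‖ := by
    intro x y
    rw [WithLp.prod_norm_eq_of_L2]
    simp only [WithLp.equiv_symm_apply, WithLp.toLp_fst, WithLp.toLp_snd]
    rw [show ‖x‖ + ‖y‖ = Real.sqrt ((‖x‖ + ‖y‖) ^ 2) from
      (Real.sqrt_sq (by positivity)).symm]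
    apply Real.sqrt_le_sqrt
    nlinarith [norm_nonneg x, norm_nonneg y]
  -- the difference norm
  have hdiff : ∀ (x : EuclideanSpace ℝ (Fin s)) (y y' : EuclideanSpace ℝ (Fin t)),
      ‖(WithLp.equiv 2 (EuclideanSpace ℝ (Fin s) × EuclideanSpace ℝ (Fin t))).symm (x, y) -
        (WithLp.equiv 2 (EuclideanSpace ℝ (Fin s) × EuclideanSpace ℝ (Fin t))).symm (x, y')‖
        = ‖y - y'‖ := by
    intro x y y'
    rw [WithLp.equiv_symm_apply, ← WithLp.toLp_sub, Prod.mk_sub_mk, sub_self]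
    exact WithLp.norm_toLp_snd 2 _ _ _
  refine ⟨L * 2 ^ (n + 1) * (1 + C) + L, by positivity, fun y y' => ?_⟩
  set g₁ : Ω → ℝ := fun ω =>
    f ((WithLp.equiv 2 (EuclideanSpace ℝ (Fin s) × EuclideanSpace ℝ (Fin t))).symm (X ω, y))
    with hg₁
  set g₂ : Ω → ℝ := fun ω =>
    f ((WithLp.equiv 2 (EuclideanSpace ℝ (Fin s) × EuclideanSpace ℝ (Fin t))).symm (X ω, y'))
    with hg₂
  set bd : Ω → ℝ := fun ω =>
    L * (1 + 2 ^ n * (‖X ω‖ ^ n + ‖y‖ ^ n) + 2 ^ n * (‖X ω‖ ^ n + ‖y'‖ ^ n)) * ‖y - y'‖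
    with hbddef
  -- pointwise bound
  have hbd : ∀ ω, |g₁ ω - g₂ ω| ≤ bd ω := by
    intro ω
    refine (hf _ _).trans ?_
    rw [hdiff, hbddef]
    apply mul_le_mul_of_nonneg_right _ (norm_nonneg _)
    apply mul_le_mul_of_nonneg_left _ hL.le
    have h1 := (pow_le_pow_left₀ (norm_nonneg _) (hpair (X ω) y) n).trans
        (two_pow_split n _ _ (norm_nonneg _) (norm_nonneg _))
    have h2 := (pow_le_pow_left₀ (norm_nonneg _) (hpair (X ω) y') n).trans
        (two_pow_split n _ _ (norm_nonneg _) (norm_nonneg _))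
    linarith
  -- measurability
  have hmeas : ∀ y₀ : EuclideanSpace ℝ (Fin t), Measurable (fun ω =>
      f ((WithLp.equiv 2 (EuclideanSpace ℝ (Fin s) × EuclideanSpace ℝ (Fin t))).symm
        (X ω, y₀))) := by
    intro y₀
    exact ((hcont.comp (WithLp.prod_continuous_toLp 2 _ _)).measurable).comp
      (hX.prodMk measurable_const)
  -- the bounding function is integrable and its integral computed
  have hbdeq : bd = fun ω => (2 ^ n * 2 * L * ‖y - y'‖) * ‖X ω‖ ^ n +
      (L * (1 + 2 ^ n * ‖y‖ ^ n + 2 ^ n * ‖y'‖ ^ n) * ‖y - y'‖) := by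
    funext ω; rw [hbddef]; ring
  have hbint : Integrable bd μ := by
    rw [hbdeq]; exact (hmom.const_mul _).add (integrable_const _)
  have hbdint_eq : ∫ ω, bd ω ∂μ = (2 ^ n * 2 * L * ‖y - y'‖) * C +
      (L * (1 + 2 ^ n * ‖y‖ ^ n + 2 ^ n * ‖y'‖ ^ n) * ‖y - y'‖) := by
    rw [hbdeq, integral_add (hmom.const_mul _) (integrable_const _), integral_const_mul,
      integral_const, probReal_univ]
    simp [hC]
  -- final constant comparison
  have hfinal : (2 ^ n * 2 * L * ‖y - y'‖) * C +
      (L * (1 + 2 ^ n * ‖y‖ ^ n + 2 ^ n * ‖y'‖ ^ n) * ‖y - y'‖) ≤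
      (L * 2 ^ (n + 1) * (1 + C) + L) * (1 + ‖y‖ ^ n + ‖y'‖ ^ n) * ‖y - y'‖ := by
    have hy : (0:ℝ) ≤ ‖y‖ ^ n := by positivity
    have hy' : (0:ℝ) ≤ ‖y'‖ ^ n := by positivity
    have hd : (0:ℝ) ≤ ‖y - y'‖ := norm_nonneg _
    have hp : (2:ℝ) ^ (n + 1) = 2 * 2 ^ n := by ring
    nlinarith [mul_nonneg (mul_nonneg hL.le hd) (add_nonneg hy hy'),
      mul_nonneg (mul_nonneg (mul_nonneg hL.le hC0) hd) (add_nonneg hy hy'),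
      mul_nonneg (mul_nonneg hL.le hC0) hd, mul_nonneg hL.le hd]
  -- g₁ - g₂ is integrable
  have hsubint : Integrable (fun ω => g₁ ω - g₂ ω) μ := by
    refine Integrable.mono' hbint (((hmeas y).sub (hmeas y')).aestronglyMeasurable) ?_
    filter_upwards with ω
    rw [Real.norm_eq_abs]
    exact hbd ω
  by_cases hint : Integrable g₁ μ
  · have hint2 : Integrable g₂ μ := by
      have he2 : g₂ = fun ω => g₁ ω - (g₁ ω - g₂ ω) := by funext ω; ring
      rw [he2]; exact hint.sub hsubint
    rw [← integral_sub hint hint2]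
    calc |∫ ω, (g₁ ω - g₂ ω) ∂μ| ≤ ∫ ω, |g₁ ω - g₂ ω| ∂μ := by
          simpa [Real.norm_eq_abs] using
            norm_integral_le_integral_norm (μ := μ) (f := fun ω => g₁ ω - g₂ ω)
      _ ≤ ∫ ω, bd ω ∂μ := integral_mono hsubint.abs hbint hbd
      _ = _ := hbdint_eq
      _ ≤ _ := hfinal
  · have hint2 : ¬ Integrable g₂ μ := by
      intro h
      have he1 : g₁ = fun ω => g₂ ω + (g₁ ω - g₂ ω) := by funext ω; ring
      exact hint (he1 ▸ h.add hsubint)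
    rw [integral_undef hint, integral_undef hint2, sub_zero, abs_zero]
    positivity
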